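/- For every positive integer n, H_n^{(3)} = ∑_{k=1}^{n-1} n/(k(n-k)^3) - (1/2)∑_{k=1}^{n-1} n/(k^2(n-k)^2) + 1/n^3. -/

import Mathlib

open Real Filter Finset

noncomputable def Li (m : ℕ) (x : ℝ) : ℝ := ∑' n : ℕ, x ^ (n + 1) / (n + 1 : ℝ) ^ m

noncomputable def H (p n : ℕ) : ℝ := ∑ j ∈ Finset.Icc 1 n, 1 / (j : ℝ) ^ p

noncomputable def Hbar (p n : ℕ) : ℝ := ∑ j ∈ Finset.Icc 1 n, (-1 : ℝ) ^ (j - 1) / (j : ℝ) ^ p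

lemma reflect_sum (n : ℕ) (f : ℕ → ℝ) :
    ∑ k ∈ Finset.Icc 1 (n - 1), f k = ∑ k ∈ Finset.Icc 1 (n - 1), f (n - k) := by
  refine Finset.sum_nbij' (fun k => n - k) (fun k => n - k) ?_ ?_ ?_ ?_ ?_ <;>
    simp only [Finset.mem_Icc] <;> intro a ha
  · omega
  · omega
  · omega
  · omega
  · congr 1; omega

theorem stmt2 (n : ℕ) (hn : 1 ≤ n) :
    H 3 n = (∑ k ∈ Finset.Icc 1 (n - 1), (n : ℝ) / (k * ((n : ℝ) - k) ^ 3))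
      - (1 / 2) * (∑ k ∈ Finset.Icc 1 (n - 1), (n : ℝ) / ((k : ℝ) ^ 2 * ((n : ℝ) - k) ^ 2))
      + 1 / (n : ℝ) ^ 3 := by
  have key : ∀ k ∈ Finset.Icc 1 (n - 1),
      (n : ℝ) / (k * ((n : ℝ) - k) ^ 3) - (1 / 2) * ((n : ℝ) / ((k : ℝ) ^ 2 * ((n : ℝ) - k) ^ 2))
      = 1 / ((n : ℝ) - k) ^ 3
        + (1 / 2) * (1 / (k * ((n : ℝ) - k) ^ 2) - 1 / ((k : ℝ) ^ 2 * ((n : ℝ) - k))) := by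
    intro k hk
    simp only [Finset.mem_Icc] at hk
    have hk1 : (1 : ℝ) ≤ (k : ℝ) := by exact_mod_cast hk.1
    have hkn : (k : ℝ) + 1 ≤ (n : ℝ) := by exact_mod_cast (by omega : k + 1 ≤ n)
    have h1 : (k : ℝ) ≠ 0 := by linarith
    have h2 : (n : ℝ) - k ≠ 0 := by linarith
    field_simp
    ring
  have hsum : (∑ k ∈ Finset.Icc 1 (n - 1), (n : ℝ) / (k * ((n : ℝ) - k) ^ 3))
      - (1 / 2) * (∑ k ∈ Finset.Icc 1 (n - 1), (n : ℝ) / ((k : ℝ) ^ 2 * ((n : ℝ) - k) ^ 2))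
      = ∑ k ∈ Finset.Icc 1 (n - 1), (1 / ((n : ℝ) - k) ^ 3
        + (1 / 2) * (1 / (k * ((n : ℝ) - k) ^ 2) - 1 / ((k : ℝ) ^ 2 * ((n : ℝ) - k)))) := by
    rw [Finset.mul_sum, ← Finset.sum_sub_distrib]
    exact Finset.sum_congr rfl key
  rw [hsum, Finset.sum_add_distrib]
  -- first piece: reflection gives ∑ 1/k^3
  have e1 : ∑ k ∈ Finset.Icc 1 (n - 1), 1 / ((n : ℝ) - k) ^ 3
      = ∑ k ∈ Finset.Icc 1 (n - 1), 1 / (k : ℝ) ^ 3 := by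
    rw [reflect_sum n (fun k => 1 / ((n : ℝ) - k) ^ 3)]
    apply Finset.sum_congr rfl
    intro k hk
    simp only [Finset.mem_Icc] at hk
    have h : (n : ℝ) - (n - k : ℕ) = (k : ℝ) := by
      have : ((n - k : ℕ) : ℝ) = (n : ℝ) - k := by
        have : k ≤ n := by omega
        push_cast [this]; ring
      rw [this]; ring
    rw [h]
  -- second piece vanishes by symmetry
  have e2 : ∑ k ∈ Finset.Icc 1 (n - 1),
      (1 / 2) * (1 / (k * ((n : ℝ) - k) ^ 2) - 1 / ((k : ℝ) ^ 2 * ((n : ℝ) - k))) = 0 := by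
    have hrefl : ∑ k ∈ Finset.Icc 1 (n - 1),
        (1 / 2) * (1 / (k * ((n : ℝ) - k) ^ 2) - 1 / ((k : ℝ) ^ 2 * ((n : ℝ) - k)))
        = ∑ k ∈ Finset.Icc 1 (n - 1),
        (1 / 2) * (1 / ((n - k : ℕ) * ((n : ℝ) - (n - k : ℕ)) ^ 2)
          - 1 / (((n - k : ℕ) : ℝ) ^ 2 * ((n : ℝ) - (n - k : ℕ)))) :=
      reflect_sum n (fun k =>
        (1 / 2) * (1 / (k * ((n : ℝ) - k) ^ 2) - 1 / ((k : ℝ) ^ 2 * ((n : ℝ) - k))))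
    have h2 : ∑ k ∈ Finset.Icc 1 (n - 1),
        (1 / 2) * (1 / ((n - k : ℕ) * ((n : ℝ) - (n - k : ℕ)) ^ 2)
          - 1 / (((n - k : ℕ) : ℝ) ^ 2 * ((n : ℝ) - (n - k : ℕ))))
        = - ∑ k ∈ Finset.Icc 1 (n - 1),
        (1 / 2) * (1 / (k * ((n : ℝ) - k) ^ 2) - 1 / ((k : ℝ) ^ 2 * ((n : ℝ) - k))) := by
      rw [← Finset.sum_neg_distrib]
      apply Finset.sum_congr rfl
      intro k hk
      simp only [Finset.mem_Icc] at hk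
      have hc : ((n - k : ℕ) : ℝ) = (n : ℝ) - k := by
        push_cast [show k ≤ n by omega]; ring
      rw [hc]; ring
    linarith
  rw [e1, e2, add_zero]
  -- H 3 n = ∑_{Icc 1 (n-1)} 1/k^3 + 1/n^3
  unfold H
  rw [show n = (n - 1) + 1 by omega, Finset.sum_Icc_succ_top (by omega : 1 ≤ n - 1 + 1)]
  push_cast
  rfl
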